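/- Let (Y,Z) be an ℕ²-valued random variable with E[R^{Y+Z}] ≤ M (R > 1), and suppose a branching process starts according to (Y⁰,Z⁰) with E[R^{Y⁰+Z⁰}] ≤ M, type-L particles reproducing with offspring (Y,Z), type-S particles barren. Let x₀ = 1/(1+E Z) and fix c₀ > 0. Then there exist constants C, c > 0 (depending on R, M, E Z, c₀) such that for all 0 ≤ n ≤ N with |n/N − x₀| ≥ c₀, the probability p_{n,N−n} that the process has exactly n type-L and N−n type-S particles satisfies p_{n,N−n} ≤ C·e^{−cN}. -/

import Mathlib

open MeasureTheory ProbabilityTheory Finset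


lemma bfld_exp_quad : ∀ x : ℝ, Real.exp x ≤ 1 + x + x^2 * Real.exp |x| := by
  intro x
  rcases le_or_gt 0 x with hx | hx
  · rw [abs_of_nonneg hx]
    have h1 : (-x) + 1 ≤ Real.exp (-x) := Real.add_one_le_exp (-x)
    have h2 : Real.exp (-x) * Real.exp x = 1 := by rw [← Real.exp_add]; simp
    have h3 : (0:ℝ) < Real.exp x := Real.exp_pos x
    have k1 : 1 - Real.exp (-x) ≤ x := by linarith
    have k3 : x * (1 - Real.exp (-x)) ≤ x * x :=
      mul_le_mul_of_nonneg_left k1 hx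
    have K : 1 - Real.exp (-x) - x * Real.exp (-x) ≤ x^2 := by nlinarith
    nlinarith [mul_le_mul_of_nonneg_left K h3.le]
  · rw [abs_of_neg hx]
    have h1 : x + 1 ≤ Real.exp x := Real.add_one_le_exp x
    have h2 : (-x) + 1 ≤ Real.exp (-x) := Real.add_one_le_exp (-x)
    have h6 : Real.exp x * Real.exp (-x) = 1 := by rw [← Real.exp_add]; simp
    have h3 : (0:ℝ) < Real.exp x := Real.exp_pos x
    have f1 : 1 - Real.exp x ≤ -x := by linarith
    have f2 : 1 - Real.exp x ≥ -x * Real.exp x := by nlinarith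
    have f3 : (-x) * (1 - Real.exp x) ≤ (-x) * (-x) :=
      mul_le_mul_of_nonneg_left f1 (by linarith)
    have K : Real.exp x - 1 - x ≤ x^2 := by nlinarith
    have h5 : (1:ℝ) ≤ Real.exp (-x) := by linarith
    nlinarith [sq_nonneg x]

lemma bfld_sq_le : ∀ x : ℝ, 0 ≤ x → x^2 ≤ 4 * Real.exp x := by
  intro x hx
  have h1 : x/2 + 1 ≤ Real.exp (x/2) := Real.add_one_le_exp (x/2)
  have h2 : Real.exp (x/2) * Real.exp (x/2) = Real.exp x := by
    rw [← Real.exp_add]; ring_nf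
  nlinarith [Real.exp_nonneg (x/2)]

lemma bfld_integral_prod {Ω ι : Type*} [MeasurableSpace Ω] {μ : Measure Ω}
    [IsProbabilityMeasure μ]
    (f : ι → Ω → ℝ) (hind : iIndepFun f μ)
    (hmeas : ∀ i, Measurable (f i)) (hnn : ∀ i ω, 0 ≤ f i ω) (s : Finset ι) :
    ∫ ω, ∏ i ∈ s, f i ω ∂μ = ∏ i ∈ s, ∫ ω, f i ω ∂μ := by
  classical
  induction s using Finset.cons_induction with
  | empty => simp
  | cons i s hi ih =>
    rw [Finset.prod_cons]
    have hIF : IndepFun (∏ j ∈ s, f j) (f i) μ :=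
      hind.indepFun_finsetProd_of_notMem hmeas hi
    have hPeq : (∏ j ∈ s, f j) = fun ω => ∏ j ∈ s, f j ω := by
      funext ω; simp
    have hnnP : (0 : Ω → ℝ) ≤ ∏ j ∈ s, f j := fun ω => by
      simpa using Finset.prod_nonneg fun j (_ : j ∈ s) => hnn j ω
    have hPm : AEMeasurable (∏ j ∈ s, f j) μ := by
      rw [hPeq]; exact (Finset.measurable_prod s fun j _ => hmeas j).aemeasurable
    have key := hIF.symm.integral_mul_eq_mul_integral
      (hmeas i).aestronglyMeasurable hPm.aestronglyMeasurable
    rw [hPeq] at key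
    have hmul : (f i * fun ω => ∏ j ∈ s, f j ω) = fun ω => f i ω * ∏ j ∈ s, f j ω := rfl
    rw [hmul] at key
    calc ∫ ω, ∏ j ∈ cons i s hi, f j ω ∂μ
        = ∫ ω, f i ω * ∏ j ∈ s, f j ω ∂μ := by
          simp only [Finset.prod_cons]
      _ = (∫ ω, f i ω ∂μ) * ∫ ω, ∏ j ∈ s, f j ω ∂μ := key
      _ = (∫ ω, f i ω ∂μ) * ∏ j ∈ s, ∫ ω, f j ω ∂μ := by rw [ih]

lemma bfld_integrable_prod {Ω ι : Type*} [MeasurableSpace Ω] {μ : Measure Ω}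
    [IsProbabilityMeasure μ]
    (f : ι → Ω → ℝ) (hind : iIndepFun f μ)
    (hmeas : ∀ i, Measurable (f i)) (hint : ∀ i, Integrable (f i) μ) (s : Finset ι) :
    Integrable (fun ω => ∏ i ∈ s, f i ω) μ := by
  classical
  induction s using Finset.cons_induction with
  | empty => simpa using integrable_const (1:ℝ)
  | cons i s hi ih =>
    have hIF : IndepFun (∏ j ∈ s, f j) (f i) μ :=
      hind.indepFun_finsetProd_of_notMem hmeas hi
    have hPeq : (∏ j ∈ s, f j) = fun ω => ∏ j ∈ s, f j ω := by
      funext ω; simp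
    have hP : Integrable (∏ j ∈ s, f j) μ := by rw [hPeq]; exact ih
    have h2 := hIF.integrable_mul hP (hint i)
    have : (fun ω => ∏ j ∈ cons i s hi, f j ω) = ((∏ j ∈ s, f j) * f i : Ω → ℝ) := by
      funext ω; simp only [Finset.prod_cons, Pi.mul_apply, hPeq]; ring
    rw [this]; exact h2

set_option maxHeartbeats 1000000 in
lemma bfld_chernoff {Ω : Type} [MeasurableSpace Ω] (μ : Measure Ω) [IsProbabilityMeasure μ]
    (R M ζ : ℝ) (hR : 1 < R) (hζ : 0 ≤ ζ)
    (Y Z : ℕ → Ω → ℕ) (Y₀ Z₀ : Ω → ℕ)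
    (hY : ∀ j, Measurable (Y j)) (hZ : ∀ j, Measurable (Z j))
    (hY₀ : Measurable Y₀) (hZ₀ : Measurable Z₀)
    (hindep : iIndepFun
       (fun (i : Option ℕ) ω => i.elim (Y₀ ω, Z₀ ω) (fun j => (Y j ω, Z j ω))) μ)
    (hident : ∀ j, IdentDistrib (fun ω => (Y j ω, Z j ω)) (fun ω => (Y 0 ω, Z 0 ω)) μ μ)
    (hint : Integrable (fun ω => R ^ (Y 0 ω + Z 0 ω)) μ)
    (hintM : (∫ ω, R ^ (Y 0 ω + Z 0 ω) ∂μ) ≤ M)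
    (hint0 : Integrable (fun ω => R ^ (Y₀ ω + Z₀ ω)) μ)
    (hint0M : (∫ ω, R ^ (Y₀ ω + Z₀ ω) ∂μ) ≤ M)
    (hζint : (∫ ω, (Z 0 ω : ℝ) ∂μ) = ζ)
    (n m : ℕ) (t : ℝ) (ht : |t| ≤ Real.log R / 2) :
    (μ {ω | Z₀ ω + ∑ j ∈ Finset.range n, Z j ω = m}).toReal
      ≤ M * Real.exp ((n:ℝ)*(ζ*t + (4*M/(Real.log R/2)^2)*t^2) - t*(m:ℝ)) := by
  set a : ℝ := Real.log R / 2 with ha_def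
  have hlogR : 0 < Real.log R := Real.log_pos hR
  have ha : 0 < a := by positivity
  have hRpos : (0:ℝ) < R := by linarith
  set K : ℝ := 4 * M / a ^ 2 with hK_def
  have hta : t ≤ Real.log R := le_trans (le_trans (le_abs_self t) ht) (by linarith)
  -- R^z as exponential
  have hRz : ∀ z : ℕ, (R:ℝ) ^ z = Real.exp ((z:ℝ) * Real.log R) := by
    intro z
    rw [Real.exp_nat_mul, Real.exp_log hRpos]
  -- pointwise exp bound by R-power
  have keybound : ∀ y z : ℕ, Real.exp (t * (z:ℝ)) ≤ R ^ (y + z) := by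
    intro y z
    rw [hRz]
    apply Real.exp_le_exp.mpr
    have hz : (0:ℝ) ≤ (z:ℝ) := Nat.cast_nonneg z
    have : t * z ≤ Real.log R * z := mul_le_mul_of_nonneg_right hta hz
    push_cast
    nlinarith [mul_nonneg (Nat.cast_nonneg y : (0:ℝ) ≤ y) hlogR.le]
  -- the family of exponentials
  set F : Option ℕ → Ω → ℕ × ℕ :=
    fun i ω => i.elim (Y₀ ω, Z₀ ω) (fun j => (Y j ω, Z j ω)) with hF_def
  set φ : ℕ × ℕ → ℝ := fun p => Real.exp (t * (p.2 : ℝ)) with hφ_def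
  have hφ : Measurable φ :=
    (measurable_from_top (f := fun z : ℕ => Real.exp (t * (z:ℝ)))).comp measurable_snd
  set g : Option ℕ → Ω → ℝ := fun i => φ ∘ (F i) with hg_def
  have hgind : iIndepFun g μ := hindep.comp (fun _ => φ) (fun _ => hφ)
  have hFmeas : ∀ i, Measurable (F i) := by
    rintro (_ | j)
    · exact hY₀.prodMk hZ₀
    · exact (hY j).prodMk (hZ j)
  have hgmeas : ∀ i, Measurable (g i) := fun i => hφ.comp (hFmeas i)
  have hgnn : ∀ i ω, 0 ≤ g i ω := fun i ω => Real.exp_nonneg _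
  -- integrability
  have hint_none : Integrable (g none) μ := by
    refine hint0.mono' ((hgmeas none).aestronglyMeasurable) ?_
    filter_upwards with ω
    rw [Real.norm_eq_abs, abs_of_nonneg (hgnn none ω)]
    exact keybound (Y₀ ω) (Z₀ ω)
  have hint_some0 : Integrable (g (some 0)) μ := by
    refine hint.mono' ((hgmeas (some 0)).aestronglyMeasurable) ?_
    filter_upwards with ω
    rw [Real.norm_eq_abs, abs_of_nonneg (hgnn _ ω)]
    exact keybound (Y 0 ω) (Z 0 ω)
  have hid : ∀ j, IdentDistrib (g (some j)) (g (some 0)) μ μ :=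
    fun j => (hident j).comp hφ
  have hint_some : ∀ j, Integrable (g (some j)) μ :=
    fun j => ((hid j).integrable_iff).mpr hint_some0
  have hgint : ∀ i, Integrable (g i) μ := by
    rintro (_ | j)
    · exact hint_none
    · exact hint_some j
  -- the function f
  set T : Ω → ℕ := fun ω => Z₀ ω + ∑ j ∈ Finset.range n, Z j ω with hT_def
  set f : Ω → ℝ := fun ω => Real.exp (t * (T ω : ℝ)) with hf_def
  have hnone : (none : Option ℕ) ∉ (Finset.range n).map Function.Embedding.some := by simp
  set s : Finset (Option ℕ) := insert none ((Finset.range n).map Function.Embedding.some)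
    with hs_def
  have hf_eq : f = fun ω => ∏ i ∈ s, g i ω := by
    funext ω
    rw [hs_def, Finset.prod_insert hnone, Finset.prod_map]
    show Real.exp (t * ((Z₀ ω + ∑ j ∈ Finset.range n, Z j ω : ℕ) : ℝ))
      = Real.exp (t * (Z₀ ω : ℝ)) * ∏ j ∈ Finset.range n, Real.exp (t * (Z j ω : ℝ))
    rw [← Real.exp_sum, ← Real.exp_add]
    congr 1
    push_cast
    rw [mul_add, Finset.mul_sum]
  have hf_int : Integrable f μ := by
    rw [hf_eq]; exact bfld_integrable_prod g hgind hgmeas hgint s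
  have hf_nn : ∀ ω, 0 ≤ f ω := fun ω => Real.exp_nonneg _
  -- the integral product formula
  have hprod : ∫ ω, f ω ∂μ = (∫ ω, g none ω ∂μ) * (∫ ω, g (some 0) ω ∂μ) ^ n := by
    rw [hf_eq, bfld_integral_prod g hgind hgmeas hgnn s, hs_def,
      Finset.prod_insert hnone, Finset.prod_map]
    congr 1
    calc ∏ x ∈ Finset.range n, ∫ ω, g (Function.Embedding.some x) ω ∂μ
        = ∏ _x ∈ Finset.range n, ∫ ω, g (some 0) ω ∂μ :=
          Finset.prod_congr rfl fun j _ => (hid j).integral_eq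
      _ = (∫ ω, g (some 0) ω ∂μ) ^ n := by rw [Finset.prod_const, Finset.card_range]
  -- bound E0
  have hE0 : ∫ ω, g none ω ∂μ ≤ M := by
    refine le_trans (integral_mono hint_none hint0 ?_) hint0M
    intro ω; exact keybound (Y₀ ω) (Z₀ ω)
  have hE0nn : 0 ≤ ∫ ω, g none ω ∂μ := integral_nonneg fun ω => hgnn none ω
  -- integrability of Z
  have hZ0int : Integrable (fun ω => (Z 0 ω : ℝ)) μ := by
    refine (hint.const_mul (1/a)).mono' ((measurable_from_top (f := fun z : ℕ => (z:ℝ))).comp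
      (hZ 0)).aestronglyMeasurable ?_
    filter_upwards with ω
    rw [Real.norm_eq_abs, abs_of_nonneg (Nat.cast_nonneg _)]
    have h1 : a * (Z 0 ω : ℝ) + 1 ≤ Real.exp (a * (Z 0 ω : ℝ)) := Real.add_one_le_exp _
    have h2 : Real.exp (a * (Z 0 ω : ℝ)) ≤ R ^ (Y 0 ω + Z 0 ω) := by
      rw [hRz]
      apply Real.exp_le_exp.mpr
      push_cast
      nlinarith [(Nat.cast_nonneg (Z 0 ω) : (0:ℝ) ≤ (Z 0 ω : ℝ)), (Nat.cast_nonneg (Y 0 ω) : (0:ℝ) ≤ (Y 0 ω : ℝ)), ha, hlogR]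
    have h3 : a * (Z 0 ω : ℝ) ≤ R ^ (Y 0 ω + Z 0 ω) := by linarith
    have h4 := mul_le_mul_of_nonneg_left h3 (le_of_lt (one_div_pos.mpr ha))
    have h5 : 1/a * (a * (Z 0 ω : ℝ)) = (Z 0 ω : ℝ) := by field_simp
    linarith
  -- bound E2
  have hE2 : ∫ ω, g (some 0) ω ∂μ ≤ 1 + ζ*t + K*t^2 := by
    have i2 : Integrable (fun ω => t * (Z 0 ω : ℝ)) μ := hZ0int.const_mul t
    have i12 : Integrable (fun ω => 1 + t * (Z 0 ω : ℝ)) μ := (integrable_const 1).add i2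
    have i3 : Integrable (fun ω => (4*t^2/a^2) * R ^ (Y 0 ω + Z 0 ω)) μ := hint.const_mul _
    have hBint : Integrable (fun ω => 1 + t * (Z 0 ω : ℝ)
        + (4*t^2/a^2) * R ^ (Y 0 ω + Z 0 ω)) μ := i12.add i3
    have hpt : ∀ ω, g (some 0) ω ≤ 1 + t * (Z 0 ω : ℝ)
        + (4*t^2/a^2) * R ^ (Y 0 ω + Z 0 ω) := by
      intro ω
      set z : ℝ := (Z 0 ω : ℝ) with hz_def
      have hznn : 0 ≤ z := Nat.cast_nonneg _
      have h1 := bfld_exp_quad (t * z)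
      have h2 : Real.exp |t * z| ≤ Real.exp (a * z) := by
        apply Real.exp_le_exp.mpr
        rw [abs_mul, abs_of_nonneg hznn]
        exact mul_le_mul_of_nonneg_right ht hznn
      have h3 : z^2 ≤ (4/a^2) * Real.exp (a*z) := by
        have := bfld_sq_le (a*z) (mul_nonneg ha.le hznn)
        have ha2 : (0:ℝ) < a^2 := by positivity
        rw [div_mul_eq_mul_div, le_div_iff₀ ha2]
        nlinarith
      have h4 : Real.exp (a*z) * Real.exp (a*z) ≤ R ^ (Y 0 ω + Z 0 ω) := by
        rw [← Real.exp_add, hRz]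
        apply Real.exp_le_exp.mpr
        push_cast
        nlinarith [(Nat.cast_nonneg (Y 0 ω) : (0:ℝ) ≤ (Y 0 ω : ℝ)), hznn, hlogR, ha]
      have h5 : (t*z)^2 * Real.exp |t*z| ≤ (4*t^2/a^2) * R ^ (Y 0 ω + Z 0 ω) := by
        have e1 : (t*z)^2 * Real.exp |t*z| ≤ t^2 * ((4/a^2) * Real.exp (a*z)) * Real.exp (a*z) := by
          have : (t*z)^2 = t^2 * z^2 := by ring
          rw [this]
          have hh : z^2 * Real.exp |t*z| ≤ ((4/a^2) * Real.exp (a*z)) * Real.exp (a*z) :=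
            mul_le_mul h3 h2 (Real.exp_nonneg _)
              (mul_nonneg (div_nonneg (by norm_num) (sq_nonneg a)) (Real.exp_nonneg _))
          calc t^2 * z^2 * Real.exp |t*z| = t^2 * (z^2 * Real.exp |t*z|) := by ring
            _ ≤ t^2 * (((4/a^2) * Real.exp (a*z)) * Real.exp (a*z)) :=
              mul_le_mul_of_nonneg_left hh (sq_nonneg t)
            _ = t^2 * ((4/a^2) * Real.exp (a*z)) * Real.exp (a*z) := by ring
        refine le_trans e1 ?_
        have : t^2 * ((4/a^2) * Real.exp (a*z)) * Real.exp (a*z)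
            = (4*t^2/a^2) * (Real.exp (a*z) * Real.exp (a*z)) := by ring
        rw [this]
        exact mul_le_mul_of_nonneg_left h4
          (div_nonneg (mul_nonneg (by norm_num) (sq_nonneg t)) (sq_nonneg a))
      show Real.exp (t * z) ≤ _
      calc Real.exp (t*z) ≤ 1 + t*z + (t*z)^2 * Real.exp |t*z| := h1
        _ ≤ 1 + t*z + (4*t^2/a^2) * R ^ (Y 0 ω + Z 0 ω) := by linarith
    calc ∫ ω, g (some 0) ω ∂μ
        ≤ ∫ ω, (1 + t * (Z 0 ω : ℝ) + (4*t^2/a^2) * R ^ (Y 0 ω + Z 0 ω)) ∂μ :=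
          integral_mono hint_some0 hBint hpt
      _ = 1 + t * ζ + (4*t^2/a^2) * ∫ ω, R ^ (Y 0 ω + Z 0 ω) ∂μ := by
          rw [integral_add i12 i3, integral_add (integrable_const 1) i2,
            integral_const, integral_const_mul, integral_const_mul, hζint]
          simp
      _ ≤ 1 + ζ*t + K*t^2 := by
          have : (4*t^2/a^2) * ∫ ω, R ^ (Y 0 ω + Z 0 ω) ∂μ ≤ (4*t^2/a^2) * M :=
            mul_le_mul_of_nonneg_left hintM (by positivity)
          have heq : (4*t^2/a^2) * M = K * t^2 := by rw [hK_def]; ring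
          linarith [this, heq ▸ this]
  have hE2nn : 0 ≤ ∫ ω, g (some 0) ω ∂μ := integral_nonneg fun ω => hgnn _ ω
  have hbnn : 0 ≤ 1 + ζ*t + K*t^2 := le_trans hE2nn hE2
  have hM0 : 0 ≤ M := le_trans (integral_nonneg fun ω => by positivity) hint0M
  -- Markov
  set ε : ℝ := Real.exp (t * (m:ℝ)) with hε_def
  have hεpos : 0 < ε := Real.exp_pos _
  have hsub : {ω | Z₀ ω + ∑ j ∈ Finset.range n, Z j ω = m} ⊆ {ω | ε ≤ f ω} := by
    intro ω hω
    simp only [Set.mem_setOf_eq] at hω ⊢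
    rw [hf_def]
    simp only
    rw [show T ω = m from hω]
  have hmarkov := mul_meas_ge_le_integral_of_nonneg
    (Filter.Eventually.of_forall hf_nn) hf_int ε
  have hmono : (μ {ω | Z₀ ω + ∑ j ∈ Finset.range n, Z j ω = m}).toReal
      ≤ (μ {ω | ε ≤ f ω}).toReal :=
    ENNReal.toReal_mono (measure_ne_top μ _) (measure_mono hsub)
  have hfinal : ε * (μ {ω | Z₀ ω + ∑ j ∈ Finset.range n, Z j ω = m}).toReal
      ≤ M * (1 + ζ*t + K*t^2)^n := by
    refine le_trans (mul_le_mul_of_nonneg_left hmono hεpos.le) (le_trans hmarkov ?_)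
    rw [hprod]
    exact mul_le_mul hE0 (pow_le_pow_left₀ hE2nn hE2 n) (pow_nonneg hE2nn n) hM0
  -- conclude
  have hbexp : (1 + ζ*t + K*t^2)^n ≤ Real.exp ((n:ℝ) * (ζ*t + K*t^2)) := by
    rw [Real.exp_nat_mul]
    exact pow_le_pow_left₀ hbnn (by linarith [Real.add_one_le_exp (ζ*t + K*t^2)]) n
  have h6 : (μ {ω | Z₀ ω + ∑ j ∈ Finset.range n, Z j ω = m}).toReal
      ≤ ε⁻¹ * (M * (1 + ζ*t + K*t^2)^n) := by
    rw [inv_mul_eq_div, le_div_iff₀ hεpos]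
    linarith [hfinal, mul_comm ε ((μ {ω | Z₀ ω + ∑ j ∈ Finset.range n, Z j ω = m}).toReal)]
  refine le_trans h6 ?_
  rw [hε_def, ← Real.exp_neg]
  calc Real.exp (-(t*(m:ℝ))) * (M * (1 + ζ*t + K*t^2)^n)
      ≤ Real.exp (-(t*(m:ℝ))) * (M * Real.exp ((n:ℝ)*(ζ*t + K*t^2))) := by
        apply mul_le_mul_of_nonneg_left _ (Real.exp_nonneg _)
        exact mul_le_mul_of_nonneg_left hbexp hM0
    _ = M * Real.exp ((n:ℝ)*(ζ*t + K*t^2) - t*(m:ℝ)) := by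
        rw [show Real.exp (-(t*(m:ℝ))) * (M * Real.exp ((n:ℝ)*(ζ*t + K*t^2)))
            = M * (Real.exp ((n:ℝ)*(ζ*t+K*t^2)) * Real.exp (-(t*(m:ℝ)))) from by ring,
          ← Real.exp_add]
        ring_nf

/-- **Chernoff-type large-deviation bound** for the two-type (sesqui-type) branching
process: the fraction of type-`L` particles concentrates near `x₀ = 1/(1+E Z)`. The
process starts with `(Y⁰, Z⁰)` particles of types `L`, `S`; each type-`L` particle
independently has offspring `(Y, Z)`; type-`S` particles are barren. The process is
represented by its exploration: with i.i.d. copies `(Y_j, Z_j)`, independent of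
`(Y⁰, Z⁰)`, the event that there are exactly `n` type-`L` and `N−n` type-`S` particles
is that the walk `Y⁰ + ∑_{j<k}(Y_j − 1)` stays positive for `k < n`, hits `0` at `k = n`,
and `Z⁰ + ∑_{j<n} Z_j = N−n`. Under the exponential moment conditions
`E[R^{Y+Z}] ≤ M`, `E[R^{Y⁰+Z⁰}] ≤ M` (`R > 1`) and `E Z = ζ`, there are `C, c > 0`
depending only on `R, M, ζ, c₀` such that `p_{n,N−n} ≤ C e^{−cN}` whenever
`|n/N − x₀| ≥ c₀`. -/
theorem branching_fraction_large_deviation (R M ζ c₀ : ℝ)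
    (hR : 1 < R) (hM : 0 < M) (hζ : 0 ≤ ζ) (hc₀ : 0 < c₀) :
    ∃ C > 0, ∃ c > 0,
      ∀ (Ω : Type) (_ : MeasurableSpace Ω) (μ : Measure Ω) (_ : IsProbabilityMeasure μ)
        (Y Z : ℕ → Ω → ℕ) (Y₀ Z₀ : Ω → ℕ),
        (∀ j, Measurable (Y j)) → (∀ j, Measurable (Z j)) →
        Measurable Y₀ → Measurable Z₀ →
        iIndepFun
          (fun (i : Option ℕ) ω => i.elim (Y₀ ω, Z₀ ω) (fun j => (Y j ω, Z j ω))) μ →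
        (∀ j, IdentDistrib (fun ω => (Y j ω, Z j ω)) (fun ω => (Y 0 ω, Z 0 ω)) μ μ) →
        Integrable (fun ω => R ^ (Y 0 ω + Z 0 ω)) μ →
        (∫ ω, R ^ (Y 0 ω + Z 0 ω) ∂μ) ≤ M →
        Integrable (fun ω => R ^ (Y₀ ω + Z₀ ω)) μ →
        (∫ ω, R ^ (Y₀ ω + Z₀ ω) ∂μ) ≤ M →
        (∫ ω, (Z 0 ω : ℝ) ∂μ) = ζ →
        ∀ N n : ℕ, 1 ≤ N → n ≤ N →
          c₀ ≤ |(n : ℝ) / N - 1 / (1 + ζ)| →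
          μ {ω | (∀ k < n, 0 < (Y₀ ω : ℤ) + ∑ j ∈ Finset.range k, ((Y j ω : ℤ) - 1)) ∧
              (Y₀ ω : ℤ) + ∑ j ∈ Finset.range n, ((Y j ω : ℤ) - 1) = 0 ∧
              Z₀ ω + ∑ j ∈ Finset.range n, Z j ω = N - n}
            ≤ ENNReal.ofReal (C * Real.exp (-c * N)) := by
  have hlogR : 0 < Real.log R := Real.log_pos hR
  set a : ℝ := Real.log R / 2 with ha_def
  have ha : 0 < a := by positivity
  set K : ℝ := 4 * M / a ^ 2 with hK_def
  have hK : 0 < K := by positivity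
  set c : ℝ := min (c₀ * min (c₀/(2*K)) a / 2) a with hc_def
  have hminpos : 0 < min (c₀/(2*K)) a := lt_min (by positivity) ha
  have hc : 0 < c := lt_min (by positivity) ha
  refine ⟨M, hM, c, hc, ?_⟩
  intro Ω mΩ μ hμ Y Z Y₀ Z₀ hY hZ hY₀ hZ₀ hindep hident hint hintM hint0 hint0M hζint
    N n hN hnN hfar
  have hNpos : (0:ℝ) < N := by exact_mod_cast hN
  have h1ζ : (0:ℝ) < 1 + ζ := by linarith
  -- choose t
  obtain ⟨t, ht, hexp⟩ : ∃ t : ℝ, |t| ≤ a ∧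
      (n:ℝ)*(ζ*t + K*t^2) - t*(((N - n : ℕ)):ℝ) ≤ -(c*N) := by
    have hcast : (((N - n : ℕ)):ℝ) = (N:ℝ) - (n:ℝ) := by
      rw [Nat.cast_sub hnN]
    rcases Nat.eq_zero_or_pos n with hn0 | hn
    · refine ⟨a, by rw [abs_of_pos ha], ?_⟩
      subst hn0
      simp only [Nat.cast_zero, zero_mul, Nat.sub_zero, zero_sub]
      have hca : c ≤ a := min_le_right _ _
      have : c * N ≤ a * N := mul_le_mul_of_nonneg_right hca hNpos.le
      nlinarith
    · set D : ℝ := (N:ℝ) - (n:ℝ)*(1+ζ) with hD_def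
      have hnpos : (0:ℝ) < n := by exact_mod_cast hn
      have hD : c₀ * N ≤ |D| := by
        have e1 : D = ((N:ℝ)*(1+ζ)) * ((n:ℝ)/(N:ℝ) - 1/(1+ζ)) * (-1) := by
          field_simp
          rw [hD_def]; ring
        have e2 : |D| = (N:ℝ)*(1+ζ) * |(n:ℝ)/(N:ℝ) - 1/(1+ζ)| := by
          rw [e1, abs_mul, abs_mul, abs_neg, abs_one, mul_one,
            abs_of_pos (by positivity : (0:ℝ) < (N:ℝ)*(1+ζ))]
        rw [e2]
        have h0 : (0:ℝ) ≤ (N:ℝ)*ζ*c₀ := by positivity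
        have h3 : (N:ℝ)*(1+ζ) * c₀ ≤ (N:ℝ)*(1+ζ) * |(n:ℝ)/(N:ℝ) - 1/(1+ζ)| :=
          mul_le_mul_of_nonneg_left hfar (by positivity)
        nlinarith [h0, h3]
      have hDpos : 0 < |D| := lt_of_lt_of_le (by positivity) hD
      set τ : ℝ := min (|D|/(2*K*(n:ℝ))) a with hτ_def
      have hτpos : 0 < τ := lt_min (by positivity) ha
      refine ⟨if 0 ≤ D then τ else -τ, ?_, ?_⟩
      · rcases le_or_gt 0 D with hsign | hsign
        · rw [if_pos hsign, abs_of_pos hτpos]; exact min_le_right _ _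
        · rw [if_neg (not_le.mpr hsign), abs_neg, abs_of_pos hτpos]
          exact min_le_right _ _
      · set t : ℝ := if 0 ≤ D then τ else -τ with ht_def
        have htD : t * D = |D| * τ := by
          rcases le_or_gt 0 D with hsign | hsign
          · rw [ht_def, if_pos hsign, abs_of_nonneg hsign]; ring
          · rw [ht_def, if_neg (not_le.mpr hsign), abs_of_neg hsign]; ring
        have ht2 : t^2 = τ^2 := by
          rcases le_or_gt 0 D with hsign | hsign
          · rw [ht_def, if_pos hsign]
          · rw [ht_def, if_neg (not_le.mpr hsign)]; ring
        have hEeq : (n:ℝ)*(ζ*t + K*t^2) - t*(((N - n : ℕ)):ℝ)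
            = -(t*D) + (n:ℝ)*K*t^2 := by
          rw [hcast, hD_def]; ring
        rw [hEeq, htD, ht2]
        -- quadratic term bound
        have hτ1 : τ ≤ |D|/(2*K*(n:ℝ)) := min_le_left _ _
        have he : (2*K*(n:ℝ)) * (|D|/(2*K*(n:ℝ))) = |D| :=
          mul_div_cancel₀ _ (by positivity)
        have hq : (n:ℝ)*K*τ^2 ≤ |D| * τ / 2 := by
          have s0 : (n:ℝ)*K*τ ≤ (n:ℝ)*K*(|D|/(2*K*(n:ℝ))) :=
            mul_le_mul_of_nonneg_left hτ1 (by positivity)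
          have e : (n:ℝ)*K*(|D|/(2*K*(n:ℝ))) = |D|/2 := by
            field_simp
          have s1 : (n:ℝ)*K*τ ≤ |D|/2 := by rw [e] at s0; exact s0
          calc (n:ℝ)*K*τ^2 = ((n:ℝ)*K*τ)*τ := by ring
            _ ≤ (|D|/2)*τ := mul_le_mul_of_nonneg_right s1 hτpos.le
            _ = |D| * τ / 2 := by ring
        -- lower bound on τ
        have hτlow : min (c₀/(2*K)) a ≤ τ := by
          refine min_le_min ?_ le_rfl
          rw [div_le_div_iff₀ (by positivity) (by positivity)]
          have hnN' : (n:ℝ) ≤ (N:ℝ) := by exact_mod_cast hnN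
          have u1 : c₀ * (n:ℝ) ≤ c₀ * N := mul_le_mul_of_nonneg_left hnN' hc₀.le
          have u3 : c₀ * (n:ℝ) ≤ |D| := le_trans u1 hD
          calc c₀ * (2*K*(n:ℝ)) = (2*K) * (c₀ * (n:ℝ)) := by ring
            _ ≤ (2*K)*|D| := mul_le_mul_of_nonneg_left u3 (by positivity)
            _ = |D| * (2*K) := by ring
        have hfin : c * N ≤ |D| * τ / 2 := by
          have h1 : c ≤ c₀ * min (c₀/(2*K)) a / 2 := min_le_left _ _
          have h2 : c₀ * N * (min (c₀/(2*K)) a) ≤ |D| * τ :=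
            mul_le_mul hD hτlow hminpos.le (abs_nonneg D)
          calc c * N ≤ (c₀ * min (c₀/(2*K)) a / 2) * N :=
              mul_le_mul_of_nonneg_right h1 hNpos.le
            _ = (c₀ * N * (min (c₀/(2*K)) a))/2 := by ring
            _ ≤ |D| * τ / 2 := by linarith
        linarith
  -- apply the Chernoff bound
  have hmain := bfld_chernoff μ R M ζ hR hζ Y Z Y₀ Z₀ hY hZ hY₀ hZ₀ hindep hident
    hint hintM hint0 hint0M hζint n (N - n) t (by rw [← ha_def]; exact ht)
  rw [← ha_def, ← hK_def] at hmain
  have hsub : {ω | (∀ k < n, 0 < (Y₀ ω : ℤ) + ∑ j ∈ Finset.range k, ((Y j ω : ℤ) - 1)) ∧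
        (Y₀ ω : ℤ) + ∑ j ∈ Finset.range n, ((Y j ω : ℤ) - 1) = 0 ∧
        Z₀ ω + ∑ j ∈ Finset.range n, Z j ω = N - n}
      ⊆ {ω | Z₀ ω + ∑ j ∈ Finset.range n, Z j ω = N - n} := fun ω hω => hω.2.2
  have hfinal : (μ {ω | (∀ k < n, 0 < (Y₀ ω : ℤ) + ∑ j ∈ Finset.range k, ((Y j ω : ℤ) - 1)) ∧
        (Y₀ ω : ℤ) + ∑ j ∈ Finset.range n, ((Y j ω : ℤ) - 1) = 0 ∧
        Z₀ ω + ∑ j ∈ Finset.range n, Z j ω = N - n}).toReal ≤ M * Real.exp (-c * N) := by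
    refine le_trans (ENNReal.toReal_mono (measure_ne_top μ _) (measure_mono hsub)) ?_
    refine le_trans hmain ?_
    have := Real.exp_le_exp.mpr (le_trans hexp (le_of_eq (neg_mul c (N:ℝ)).symm))
    exact mul_le_mul_of_nonneg_left this hM.le
  calc μ _ = ENNReal.ofReal ((μ _).toReal) := (ENNReal.ofReal_toReal (measure_ne_top μ _)).symm
    _ ≤ ENNReal.ofReal (M * Real.exp (-c * N)) := ENNReal.ofReal_le_ofReal hfinal
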